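/- Let (Ω, F, ℙ) be a probability space with a filtration (F_t)_{t∈ℝ₊} satisfying ⋁_t F_t ⊆ F. For every set O in the optional σ-algebra 𝒪 there exists a set P in the predictable σ-algebra 𝒫 such that O \ P is a thin set and P \ O is a totally inaccessible thin set. -/

import Mathlib

open MeasureTheory Set
open scoped NNReal ENNReal


variable {Ω : Type*}

/-- A stopping time with respect to the filtration `𝔽`. -/
def IsStopTime {F : MeasurableSpace Ω} (𝔽 : Filtration ℝ≥0 F) (τ : Ω → ℝ≥0∞) : Prop :=
  ∀ t : ℝ≥0, MeasurableSet[𝔽 t] {ω | τ ω ≤ (t : ℝ≥0∞)}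

/-- A predictable time: a stopping time announced by a nondecreasing sequence of
finite stopping times. -/
def IsPredTime {F : MeasurableSpace Ω} (𝔽 : Filtration ℝ≥0 F) (ρ : Ω → ℝ≥0∞) : Prop :=
  IsStopTime 𝔽 ρ ∧ ∃ ρs : ℕ → Ω → ℝ≥0∞,
    (∀ n, IsStopTime 𝔽 (ρs n)) ∧ (∀ n ω, ρs n ω < ⊤) ∧ (∀ n ω, ρs n ω ≤ ρ ω) ∧
    (∀ n ω, 0 < ρ ω → ρs n ω < ρ ω) ∧ (∀ ω, Monotone fun n => ρs n ω) ∧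
    (∀ ω, Filter.Tendsto (fun n => ρs n ω) Filter.atTop (nhds (ρ ω)))

/-- The graph `⟦τ⟧ ⊆ Ω × ℝ₊` of `τ : Ω → [0,∞]`. -/
def graph (τ : Ω → ℝ≥0∞) : Set (Ω × ℝ≥0) := {p | τ p.1 = (p.2 : ℝ≥0∞)}

/-- The stochastic interval `⟦τ, ∞⟦`. -/
def rayFrom (τ : Ω → ℝ≥0∞) : Set (Ω × ℝ≥0) := {p | τ p.1 ≤ (p.2 : ℝ≥0∞)}

/-- The stochastic interval `⟦ρ, τ⟧`. -/
def stInterval (ρ τ : Ω → ℝ≥0∞) : Set (Ω × ℝ≥0) :=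
  {p | ρ p.1 ≤ (p.2 : ℝ≥0∞) ∧ (p.2 : ℝ≥0∞) ≤ τ p.1}

/-- The predictable σ-algebra on `Ω × ℝ₊`. -/
def predictableSigma {F : MeasurableSpace Ω} (𝔽 : Filtration ℝ≥0 F) :
    MeasurableSpace (Ω × ℝ≥0) :=
  MeasurableSpace.generateFrom {s | ∃ ρ, IsPredTime 𝔽 ρ ∧ s = rayFrom ρ}

/-- The optional σ-algebra on `Ω × ℝ₊`. -/
def optionalSigma {F : MeasurableSpace Ω} (𝔽 : Filtration ℝ≥0 F) :
    MeasurableSpace (Ω × ℝ≥0) :=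
  MeasurableSpace.generateFrom {s | ∃ τ, IsStopTime 𝔽 τ ∧ s = rayFrom τ}

/-- The debut of a set `S ⊆ Ω × ℝ₊`. -/
noncomputable def debut (S : Set (Ω × ℝ≥0)) (ω : Ω) : ℝ≥0∞ :=
  ⨅ (t : ℝ≥0) (_ : (ω, t) ∈ S), (t : ℝ≥0∞)

/-- Projection of a subset of `Ω × ℝ₊` onto `Ω`. -/
def projOmega (S : Set (Ω × ℝ≥0)) : Set Ω := Prod.fst '' S

/-- The outer measure `ℙ*` induced by `ℙ`. -/
noncomputable def pstar {F : MeasurableSpace Ω} (P : Measure Ω) (A : Set Ω) : ℝ≥0∞ :=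
  ⨅ (E : Set Ω) (_ : A ⊆ E) (_ : MeasurableSet E), P E

/-- A totally inaccessible stopping time: `ℙ(τ = ρ < ∞) = 0` for every predictable
time `ρ`. -/
def IsTotallyInaccessible {Ω : Type*} {F : MeasurableSpace Ω} (𝔽 : Filtration ℝ≥0 F)
    (P : Measure Ω) (τ : Ω → ℝ≥0∞) : Prop :=
  IsStopTime 𝔽 τ ∧ ∀ ρ : Ω → ℝ≥0∞, IsPredTime 𝔽 ρ → P {ω | τ ω = ρ ω ∧ τ ω < ⊤} = 0

/-- A thin set: a countable union of graphs of stopping times. -/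
def IsThinSet {Ω : Type*} {F : MeasurableSpace Ω} (𝔽 : Filtration ℝ≥0 F)
    (S : Set (Ω × ℝ≥0)) : Prop :=
  ∃ τs : ℕ → Ω → ℝ≥0∞, (∀ n, IsStopTime 𝔽 (τs n)) ∧ S = ⋃ n, graph (τs n)

/-- A totally inaccessible thin set: a countable union of graphs of totally
inaccessible stopping times. -/
def IsTotInaccThinSet {Ω : Type*} {F : MeasurableSpace Ω} (𝔽 : Filtration ℝ≥0 F)
    (P : Measure Ω) (S : Set (Ω × ℝ≥0)) : Prop :=
  ∃ τs : ℕ → Ω → ℝ≥0∞, (∀ n, IsTotallyInaccessible 𝔽 P (τs n)) ∧ S = ⋃ n, graph (τs n)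

section Helpers
open Filter

variable {F : MeasurableSpace Ω} {𝔽 : Filtration ℝ≥0 F}

lemma isStopTime_top : IsStopTime 𝔽 (fun _ => (⊤ : ℝ≥0∞)) := by
  intro t
  have : {ω : Ω | (⊤:ℝ≥0∞) ≤ (t:ℝ≥0∞)} = ∅ := by
    ext ω; simp [ENNReal.coe_lt_top.ne']
  rw [this]; exact @MeasurableSet.empty _ (𝔽 t)

lemma isPredTime_top : IsPredTime 𝔽 (fun _ => (⊤ : ℝ≥0∞)) := by
  refine ⟨isStopTime_top, fun n _ => (n : ℝ≥0∞), ?_, ?_, ?_, ?_, ?_, ?_⟩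
  · intro n t
    by_cases h : (n : ℝ≥0∞) ≤ (t : ℝ≥0∞)
    · have : {ω : Ω | (n:ℝ≥0∞) ≤ (t:ℝ≥0∞)} = univ := by ext ω; simpa using h
      rw [this]; exact @MeasurableSet.univ _ (𝔽 t)
    · have : {ω : Ω | (n:ℝ≥0∞) ≤ (t:ℝ≥0∞)} = ∅ := by ext ω; simpa using h
      rw [this]; exact @MeasurableSet.empty _ (𝔽 t)
  · exact fun n ω => ENNReal.natCast_lt_top n
  · exact fun n ω => le_top
  · exact fun n ω _ => ENNReal.natCast_lt_top n
  · exact fun ω m n h => by exact_mod_cast Nat.cast_le.2 h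
  · exact fun ω => ENNReal.tendsto_nat_nhds_top

open Classical in
/-- restriction of a time to a set -/
noncomputable def restr (σ : Ω → ℝ≥0∞) (B : Set Ω) : Ω → ℝ≥0∞ :=
  fun ω => if ω ∈ B then σ ω else ⊤

lemma restr_le_iff {σ : Ω → ℝ≥0∞} {B : Set Ω} {ω : Ω} {t : ℝ≥0} :
    restr σ B ω ≤ (t:ℝ≥0∞) ↔ ω ∈ B ∧ σ ω ≤ (t:ℝ≥0∞) := by
  unfold restr
  by_cases h : ω ∈ B
  · simp [h]
  · simp only [h, if_neg, not_false_iff, if_false]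
    simp [h, (ENNReal.coe_lt_top (r := t)).ne']

lemma isStopTime_restr {σ : Ω → ℝ≥0∞} {B : Set Ω}
    (hB : ∀ t : ℝ≥0, MeasurableSet[𝔽 t] (B ∩ {ω | σ ω ≤ (t:ℝ≥0∞)})) :
    IsStopTime 𝔽 (restr σ B) := by
  intro t
  have : {ω | restr σ B ω ≤ (t:ℝ≥0∞)} = B ∩ {ω | σ ω ≤ (t:ℝ≥0∞)} := by
    ext ω; simp only [mem_setOf_eq, restr_le_iff, mem_inter_iff]
  rw [this]; exact hB t

lemma measurable_of_isStopTime {σ : Ω → ℝ≥0∞} (hσ : IsStopTime 𝔽 σ) :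
    Measurable[F] σ := by
  apply measurable_of_Iic
  intro x
  rcases eq_or_ne x ⊤ with rfl | hx
  · simpa using MeasurableSet.univ
  · have : σ ⁻¹' Iic x = {ω | σ ω ≤ (x.toNNReal : ℝ≥0∞)} := by
      ext ω; simp [ENNReal.coe_toNNReal hx]
    rw [this]; exact (𝔽.le _) _ (hσ x.toNNReal)

section
variable {σ θ : Ω → ℝ≥0∞} (hσ : ∀ t : ℝ≥0, MeasurableSet[𝔽 t] {ω | σ ω ≤ (t : ℝ≥0∞)})
  (hθ : ∀ t : ℝ≥0, MeasurableSet[𝔽 t] {ω | θ ω ≤ (t : ℝ≥0∞)})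

include hσ hθ in
lemma lt_inter_le_mem (t : ℝ≥0) :
    MeasurableSet[𝔽 t] ({ω | σ ω < θ ω} ∩ {ω | σ ω ≤ (t:ℝ≥0∞)}) := by
  have key : {ω | σ ω < θ ω} ∩ {ω | σ ω ≤ (t:ℝ≥0∞)} =
      ⋃ q : ℚ, ({ω | σ ω ≤ (((q:ℝ).toNNReal ⊓ t : ℝ≥0) : ℝ≥0∞)} ∩
        {ω | θ ω ≤ (((q:ℝ).toNNReal ⊓ t : ℝ≥0) : ℝ≥0∞)}ᶜ) := by
    ext ω
    simp only [mem_inter_iff, mem_setOf_eq, mem_iUnion, mem_compl_iff, not_le]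
    constructor
    · rintro ⟨hlt, hle⟩
      by_cases ht : (t:ℝ≥0∞) < θ ω
      · -- take q huge, ≥ t
        obtain ⟨n, hn⟩ := exists_nat_ge t
        have heq : ((((n:ℚ):ℝ)).toNNReal ⊓ t : ℝ≥0) = t := by
          rw [inf_eq_right]
          have h2 : (t:ℝ) ≤ ((n:ℚ):ℝ) := by exact_mod_cast hn
          exact (Real.le_toNNReal_iff_coe_le (by positivity)).2 h2
        refine ⟨(n:ℚ), ?_, ?_⟩
        · rw [heq]; exact hle
        · rw [heq]; exact ht
      · push_neg at ht
        have hlt' : σ ω < θ ω := hlt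
        obtain ⟨q, hq0, hq1, hq2⟩ := ENNReal.lt_iff_exists_rat_btwn.1 hlt'
        refine ⟨q, ?_, ?_⟩
        · have hqt : ((q:ℝ).toNNReal : ℝ≥0∞) ≤ (t:ℝ≥0∞) := le_trans hq2.le ht
          have hqt' : (q:ℝ).toNNReal ≤ t := by exact_mod_cast hqt
          rw [inf_eq_left.2 hqt']
          exact hq1.le
        · have hqt : ((q:ℝ).toNNReal : ℝ≥0∞) ≤ (t:ℝ≥0∞) := le_trans hq2.le ht
          have hqt' : (q:ℝ).toNNReal ≤ t := by exact_mod_cast hqt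
          rw [inf_eq_left.2 hqt']
          exact hq2
    · rintro ⟨q, h1, h2⟩
      exact ⟨lt_of_le_of_lt h1 h2, le_trans h1 (by exact_mod_cast inf_le_right)⟩
  rw [key]
  refine MeasurableSet.iUnion fun q => ?_
  have hle : ((q:ℝ).toNNReal ⊓ t) ≤ t := inf_le_right
  exact ((𝔽.mono hle) _ (hσ _)).inter ((𝔽.mono hle) _ (hθ _)).compl

include hσ hθ in
lemma le_inter_le_mem (t : ℝ≥0) :
    MeasurableSet[𝔽 t] ({ω | θ ω ≤ σ ω} ∩ {ω | σ ω ≤ (t:ℝ≥0∞)}) := by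
  have : {ω | θ ω ≤ σ ω} ∩ {ω | σ ω ≤ (t:ℝ≥0∞)} =
      {ω | σ ω ≤ (t:ℝ≥0∞)} \ ({ω | σ ω < θ ω} ∩ {ω | σ ω ≤ (t:ℝ≥0∞)}) := by
    ext ω
    simp only [mem_inter_iff, mem_setOf_eq, mem_diff]
    constructor
    · rintro ⟨h1, h2⟩
      exact ⟨h2, fun h => (not_lt.2 h1) h.1⟩
    · rintro ⟨h1, h2⟩
      exact ⟨not_lt.1 fun hlt => h2 ⟨hlt, h1⟩, h1⟩
  rw [this]
  exact (hσ t).diff (lt_inter_le_mem hσ hθ t)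

include hσ hθ in
lemma eq_inter_le_mem (t : ℝ≥0) :
    MeasurableSet[𝔽 t] ({ω | σ ω = θ ω} ∩ {ω | σ ω ≤ (t:ℝ≥0∞)}) := by
  have : {ω | σ ω = θ ω} ∩ {ω | σ ω ≤ (t:ℝ≥0∞)} =
      ({ω | θ ω ≤ σ ω} ∩ {ω | σ ω ≤ (t:ℝ≥0∞)}) ∩
      ({ω | σ ω ≤ θ ω} ∩ {ω | θ ω ≤ (t:ℝ≥0∞)}) := by
    ext ω
    simp only [mem_inter_iff, mem_setOf_eq]
    constructor
    · rintro ⟨h1, h2⟩; exact ⟨⟨h1.ge, h2⟩, ⟨h1.le, h1 ▸ h2⟩⟩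
    · rintro ⟨⟨h1, h2⟩, ⟨h3, h4⟩⟩; exact ⟨le_antisymm h3 h1, h2⟩
  rw [this]
  exact (le_inter_le_mem hσ hθ t).inter (le_inter_le_mem hθ hσ t)
end


section SectionLemma
variable {σ : Ω → ℝ≥0∞} (hσ : IsStopTime 𝔽 σ)

include hσ in
lemma optional_section {U : Set (Ω × ℝ≥0)} (hU : MeasurableSet[optionalSigma 𝔽] U)
    (t : ℝ≥0) :
    MeasurableSet[𝔽 t] {ω | σ ω ≤ (t:ℝ≥0∞) ∧ (ω, (σ ω).toNNReal) ∈ U} := by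
  revert t
  refine MeasurableSpace.generateFrom_induction
    (p := fun (U : Set (Ω × ℝ≥0)) _ => ∀ t : ℝ≥0,
      MeasurableSet[𝔽 t] {ω | σ ω ≤ (t:ℝ≥0∞) ∧ (ω, (σ ω).toNNReal) ∈ U})
    _ ?_ ?_ ?_ ?_ U hU
  · rintro s ⟨θ, hθ, rfl⟩ _ t
    have : {ω | σ ω ≤ (t:ℝ≥0∞) ∧ (ω, (σ ω).toNNReal) ∈ rayFrom θ} =
        {ω | θ ω ≤ σ ω} ∩ {ω | σ ω ≤ (t:ℝ≥0∞)} := by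
      ext ω
      simp only [mem_setOf_eq, mem_inter_iff, rayFrom]
      constructor
      · rintro ⟨h1, h2⟩
        refine ⟨?_, h1⟩
        rwa [ENNReal.coe_toNNReal (lt_of_le_of_lt h1 ENNReal.coe_lt_top).ne] at h2
      · rintro ⟨h1, h2⟩
        refine ⟨h2, ?_⟩
        rwa [ENNReal.coe_toNNReal (lt_of_le_of_lt h2 ENNReal.coe_lt_top).ne]
    rw [this]
    exact le_inter_le_mem hσ hθ t
  · intro t
    simp only [mem_empty_iff_false, and_false, setOf_false]
    exact @MeasurableSet.empty _ (𝔽 t)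
  · intro s hs ih t
    have : {ω | σ ω ≤ (t:ℝ≥0∞) ∧ (ω, (σ ω).toNNReal) ∈ sᶜ} =
        {ω | σ ω ≤ (t:ℝ≥0∞)} \ {ω | σ ω ≤ (t:ℝ≥0∞) ∧ (ω, (σ ω).toNNReal) ∈ s} := by
      ext ω
      simp only [mem_setOf_eq, mem_diff, mem_compl_iff]
      tauto
    rw [this]
    exact (hσ t).diff (ih t)
  · intro f hf ih t
    have : {ω | σ ω ≤ (t:ℝ≥0∞) ∧ (ω, (σ ω).toNNReal) ∈ ⋃ i, f i} =
        ⋃ i, {ω | σ ω ≤ (t:ℝ≥0∞) ∧ (ω, (σ ω).toNNReal) ∈ f i} := by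
      ext ω
      simp only [mem_setOf_eq, mem_iUnion]
      tauto
    rw [this]
    exact MeasurableSet.iUnion fun i => ih i t

include hσ in
lemma mem_restr_set {U : Set (Ω × ℝ≥0)} (hU : MeasurableSet[optionalSigma 𝔽] U)
    (t : ℝ≥0) :
    MeasurableSet[𝔽 t]
      ({ω | σ ω < ⊤ ∧ (ω, (σ ω).toNNReal) ∈ U} ∩ {ω | σ ω ≤ (t:ℝ≥0∞)}) := by
  have : {ω | σ ω < ⊤ ∧ (ω, (σ ω).toNNReal) ∈ U} ∩ {ω | σ ω ≤ (t:ℝ≥0∞)} =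
      {ω | σ ω ≤ (t:ℝ≥0∞) ∧ (ω, (σ ω).toNNReal) ∈ U} := by
    ext ω
    simp only [mem_inter_iff, mem_setOf_eq]
    constructor
    · rintro ⟨⟨_, h2⟩, h3⟩; exact ⟨h3, h2⟩
    · rintro ⟨h1, h2⟩; exact ⟨⟨lt_of_le_of_lt h1 ENNReal.coe_lt_top, h2⟩, h1⟩
  rw [this]
  exact optional_section hσ hU t

end SectionLemma

lemma graph_restr (σ : Ω → ℝ≥0∞) (B : Set Ω) :
    graph (restr σ B) = {p : Ω × ℝ≥0 | σ p.1 = (p.2:ℝ≥0∞) ∧ p.1 ∈ B} := by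
  ext ⟨ω, t⟩
  simp only [graph, restr, mem_setOf_eq]
  by_cases h : ω ∈ B
  · simp [h]
  · simp only [h, if_neg, not_false_iff, if_false, and_false, iff_false]
    exact fun hc => (ENNReal.coe_lt_top (r := t)).ne' hc

lemma isThinSet_of_subset {U : Set (Ω × ℝ≥0)} (hU : MeasurableSet[optionalSigma 𝔽] U)
    (τs : ℕ → Ω → ℝ≥0∞) (hτ : ∀ n, IsStopTime 𝔽 (τs n))
    (hsub : U ⊆ ⋃ n, graph (τs n)) : IsThinSet 𝔽 U := by
  refine ⟨fun n => restr (τs n) {ω | τs n ω < ⊤ ∧ (ω, (τs n ω).toNNReal) ∈ U}, ?_, ?_⟩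
  · intro n
    exact isStopTime_restr (mem_restr_set (hτ n) hU)
  · ext ⟨ω, t⟩
    simp only [mem_iUnion, graph_restr, mem_setOf_eq]
    constructor
    · intro hp
      obtain ⟨n, hn⟩ := mem_iUnion.1 (hsub hp)
      have hn' : τs n ω = (t:ℝ≥0∞) := hn
      refine ⟨n, hn', lt_of_le_of_lt hn'.le ENNReal.coe_lt_top, ?_⟩
      rw [hn', ENNReal.toNNReal_coe]
      exact hp
    · rintro ⟨n, h1, h2, h3⟩
      rwa [h1, ENNReal.toNNReal_coe] at h3

lemma isTotallyInaccessible_restr {P : Measure Ω} {σ : Ω → ℝ≥0∞} {B : Set Ω}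
    (hσ : IsTotallyInaccessible 𝔽 P σ)
    (hB : ∀ t : ℝ≥0, MeasurableSet[𝔽 t] (B ∩ {ω | σ ω ≤ (t:ℝ≥0∞)})) :
    IsTotallyInaccessible 𝔽 P (restr σ B) := by
  refine ⟨isStopTime_restr hB, fun ρ hρ => ?_⟩
  refine measure_mono_null ?_ (hσ.2 ρ hρ)
  intro ω hω
  simp only [mem_setOf_eq, restr] at hω ⊢
  by_cases h : ω ∈ B
  · simpa [h] using hω
  · simp [h] at hω

lemma isTotInaccThinSet_of_subset {P : Measure Ω} {U : Set (Ω × ℝ≥0)}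
    (hU : MeasurableSet[optionalSigma 𝔽] U)
    (τs : ℕ → Ω → ℝ≥0∞) (hτ : ∀ n, IsTotallyInaccessible 𝔽 P (τs n))
    (hsub : U ⊆ ⋃ n, graph (τs n)) : IsTotInaccThinSet 𝔽 P U := by
  refine ⟨fun n => restr (τs n) {ω | τs n ω < ⊤ ∧ (ω, (τs n ω).toNNReal) ∈ U}, ?_, ?_⟩
  · intro n
    exact isTotallyInaccessible_restr (hτ n) (mem_restr_set (hτ n).1 hU)
  · ext ⟨ω, t⟩
    simp only [mem_iUnion, graph_restr, mem_setOf_eq]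
    constructor
    · intro hp
      obtain ⟨n, hn⟩ := mem_iUnion.1 (hsub hp)
      have hn' : τs n ω = (t:ℝ≥0∞) := hn
      refine ⟨n, hn', lt_of_le_of_lt hn'.le ENNReal.coe_lt_top, ?_⟩
      rw [hn', ENNReal.toNNReal_coe]
      exact hp
    · rintro ⟨n, h1, h2, h3⟩
      rwa [h1, ENNReal.toNNReal_coe] at h3

open Classical in
lemma isPredTime_piece {τ : Ω → ℝ≥0∞} (hτ : IsStopTime 𝔽 τ) {q r : ℝ≥0} (hqr : q < r) :
    IsPredTime 𝔽 (fun ω => if τ ω ≤ (q:ℝ≥0∞) then (r:ℝ≥0∞) else ⊤) := by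
  set u : ℕ → ℝ≥0 := fun n => r - (r - q) / (n + 1) with hu
  have hq_le_u : ∀ n, q ≤ u n := by
    intro n
    have h1 : (r - q) / (n + 1) ≤ r - q := by
      rw [div_le_iff₀ (by positivity)]
      exact le_mul_of_one_le_right zero_le (by
        have : (1:ℝ≥0) ≤ (n:ℝ≥0) + 1 := le_add_self
        simpa using this)
    calc q = r - (r - q) := (tsub_tsub_cancel_of_le hqr.le).symm
    _ ≤ r - (r - q) / (n + 1) := tsub_le_tsub_left h1 r
  have hu_lt_r : ∀ n, u n < r := by
    intro n
    exact tsub_lt_self (lt_of_le_of_lt (zero_le : (0:ℝ≥0) ≤ q) hqr)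
      (div_pos (tsub_pos_of_lt hqr) (by positivity))
  have hu_mono : Monotone u := by
    intro m n hmn
    apply tsub_le_tsub_left
    apply div_le_div_of_nonneg_left ?_ ?_ ?_
    · exact zero_le
    · positivity
    · exact_mod_cast add_le_add_left (Nat.cast_le.2 hmn) 1
  have hu_tendsto : Tendsto (fun n => (u n : ℝ)) atTop (nhds r) := by
    have h0 : Tendsto (fun n : ℕ => ((r - q : ℝ≥0) : ℝ) / (n + 1)) atTop (nhds 0) := by
      have := tendsto_const_div_atTop_nhds_zero_nat ((r - q : ℝ≥0) : ℝ)
      exact this.comp (tendsto_add_atTop_nat 1) |>.congr (fun n => by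
        simp [Function.comp, div_eq_mul_inv, add_comm])
    have : Tendsto (fun n : ℕ => (r:ℝ) - ((r - q : ℝ≥0) : ℝ) / (n + 1)) atTop (nhds ((r:ℝ) - 0)) :=
      tendsto_const_nhds.sub h0
    rw [sub_zero] at this
    refine this.congr fun n => ?_
    rw [hu]
    have h1 : ((r - q : ℝ≥0) : ℝ) / ((n:ℝ) + 1) = (((r - q) / (n + 1) : ℝ≥0) : ℝ) := by
      push_cast; ring
    rw [h1, ← NNReal.coe_sub]
    exact le_trans (div_le_self zero_le (by
      have : (1:ℝ≥0) ≤ (n:ℝ≥0) + 1 := le_add_self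
      simpa using this)) (tsub_le_self)
  refine ⟨?_, fun n ω => if τ ω ≤ (q:ℝ≥0∞) then ((u n : ℝ≥0) : ℝ≥0∞) else ((r:ℝ≥0∞) + n),
    ?_, ?_, ?_, ?_, ?_, ?_⟩
  · -- stopping time
    intro t
    by_cases hrt : r ≤ t
    · have : {ω | (if τ ω ≤ (q:ℝ≥0∞) then (r:ℝ≥0∞) else ⊤) ≤ (t:ℝ≥0∞)} = {ω | τ ω ≤ (q:ℝ≥0∞)} := by
        ext ω; by_cases h : τ ω ≤ (q:ℝ≥0∞) <;> simp [h, hrt, ENNReal.coe_le_coe,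
          (ENNReal.coe_lt_top (r := t)).ne']
      rw [this]
      exact 𝔽.mono (le_trans hqr.le hrt) _ (hτ q)
    · have : {ω | (if τ ω ≤ (q:ℝ≥0∞) then (r:ℝ≥0∞) else ⊤) ≤ (t:ℝ≥0∞)} = ∅ := by
        ext ω; by_cases h : τ ω ≤ (q:ℝ≥0∞) <;> simp [h, hrt, ENNReal.coe_le_coe,
          (ENNReal.coe_lt_top (r := t)).ne']
      rw [this]
      exact @MeasurableSet.empty _ (𝔽 t)
  · -- each ρs n is a stopping time
    intro n t
    by_cases h1 : ((u n : ℝ≥0) : ℝ≥0∞) ≤ (t:ℝ≥0∞)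
    · by_cases h2 : (r:ℝ≥0∞) + n ≤ (t:ℝ≥0∞)
      · have : {ω | (if τ ω ≤ (q:ℝ≥0∞) then ((u n : ℝ≥0) : ℝ≥0∞) else ((r:ℝ≥0∞) + n)) ≤ (t:ℝ≥0∞)}
            = univ := by
          ext ω; by_cases h : τ ω ≤ (q:ℝ≥0∞) <;> simp [h, h1, h2]
        rw [this]; exact @MeasurableSet.univ _ (𝔽 t)
      · have : {ω | (if τ ω ≤ (q:ℝ≥0∞) then ((u n : ℝ≥0) : ℝ≥0∞) else ((r:ℝ≥0∞) + n)) ≤ (t:ℝ≥0∞)}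
            = {ω | τ ω ≤ (q:ℝ≥0∞)} := by
          ext ω; by_cases h : τ ω ≤ (q:ℝ≥0∞) <;> simp [h, h1, h2]
        rw [this]
        have hqt : q ≤ t := by
          have : (q:ℝ≥0∞) ≤ (t:ℝ≥0∞) := le_trans (by exact_mod_cast hq_le_u n) h1
          exact_mod_cast this
        exact 𝔽.mono hqt _ (hτ q)
    · by_cases h2 : (r:ℝ≥0∞) + n ≤ (t:ℝ≥0∞)
      · exfalso
        exact h1 (le_trans (by exact_mod_cast (hu_lt_r n).le) (le_trans le_self_add h2))
      · have : {ω | (if τ ω ≤ (q:ℝ≥0∞) then ((u n : ℝ≥0) : ℝ≥0∞) else ((r:ℝ≥0∞) + n)) ≤ (t:ℝ≥0∞)}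
            = ∅ := by
          ext ω; by_cases h : τ ω ≤ (q:ℝ≥0∞) <;> simp [h, h1, h2]
        rw [this]; exact @MeasurableSet.empty _ (𝔽 t)
  · -- finite
    intro n ω
    by_cases h : τ ω ≤ (q:ℝ≥0∞) <;> simp [h, ENNReal.add_lt_top]
  · -- ≤ ρ
    intro n ω
    by_cases h : τ ω ≤ (q:ℝ≥0∞) <;> simp [h]
    exact_mod_cast (hu_lt_r n).le
  · -- < ρ when 0 < ρ
    intro n ω _
    by_cases h : τ ω ≤ (q:ℝ≥0∞) <;> simp [h, ENNReal.add_lt_top]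
    exact_mod_cast hu_lt_r n
  · -- monotone
    intro ω m n hmn
    by_cases h : τ ω ≤ (q:ℝ≥0∞) <;> simp [h]
    · exact_mod_cast hu_mono hmn
    · exact_mod_cast hmn
  · -- tendsto
    intro ω
    by_cases h : τ ω ≤ (q:ℝ≥0∞) <;> simp only [h, if_pos, if_neg, not_false_iff, if_true,
      if_false]
    · exact ENNReal.tendsto_coe.2 (NNReal.tendsto_coe.1 hu_tendsto)
    · refine tendsto_nhds_top_mono (ENNReal.tendsto_nat_nhds_top) ?_
      exact Filter.Eventually.of_forall fun n => le_add_self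


open Classical in
lemma rayFrom_piece {τ : Ω → ℝ≥0∞} (q r : ℝ≥0) :
    rayFrom (fun ω => if τ ω ≤ (q:ℝ≥0∞) then (r:ℝ≥0∞) else ⊤) =
      {p : Ω × ℝ≥0 | τ p.1 ≤ (q:ℝ≥0∞) ∧ (r:ℝ≥0∞) ≤ (p.2:ℝ≥0∞)} := by
  ext ⟨ω, t⟩
  simp only [rayFrom, mem_setOf_eq]
  by_cases h : τ ω ≤ (q:ℝ≥0∞) <;> simp [h, (ENNReal.coe_lt_top (r := t)).ne']

lemma strictRay_predMeasurable {τ : Ω → ℝ≥0∞} (hτ : IsStopTime 𝔽 τ) :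
    MeasurableSet[predictableSigma 𝔽] {p : Ω × ℝ≥0 | τ p.1 < (p.2:ℝ≥0∞)} := by
  classical
  have key : {p : Ω × ℝ≥0 | τ p.1 < (p.2:ℝ≥0∞)} =
      ⋃ q : ℚ, ⋃ r : ℚ,
        if ((q:ℝ).toNNReal < (r:ℝ).toNNReal) then
          {p : Ω × ℝ≥0 | τ p.1 ≤ (((q:ℝ).toNNReal : ℝ≥0) : ℝ≥0∞) ∧
            (((r:ℝ).toNNReal : ℝ≥0) : ℝ≥0∞) ≤ (p.2:ℝ≥0∞)}
        else ∅ := by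
    ext ⟨ω, t⟩
    simp only [mem_setOf_eq, mem_iUnion]
    constructor
    · intro h
      obtain ⟨q, hq0, hq1, hq2⟩ := ENNReal.lt_iff_exists_rat_btwn.1 h
      obtain ⟨r, hr0, hr1, hr2⟩ := ENNReal.lt_iff_exists_rat_btwn.1 hq2
      refine ⟨q, r, ?_⟩
      rw [if_pos (by exact_mod_cast hr1)]
      exact ⟨hq1.le, (by exact_mod_cast hr2.le)⟩
    · rintro ⟨q, r, hqr⟩
      by_cases h : ((q:ℝ).toNNReal < (r:ℝ).toNNReal)
      · rw [if_pos h] at hqr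
        exact lt_of_le_of_lt hqr.1 (lt_of_lt_of_le (by exact_mod_cast h) hqr.2)
      · rw [if_neg h] at hqr
        exact absurd hqr (notMem_empty _)
  rw [key]
  refine MeasurableSet.iUnion fun q => MeasurableSet.iUnion fun r => ?_
  by_cases h : ((q:ℝ).toNNReal < (r:ℝ).toNNReal)
  · rw [if_pos h, ← rayFrom_piece]
    exact MeasurableSpace.measurableSet_generateFrom
      ⟨_, isPredTime_piece hτ h, rfl⟩
  · rw [if_neg h]
    exact @MeasurableSet.empty _ (predictableSigma 𝔽)

lemma closedRay_predMeasurable {τ : Ω → ℝ≥0∞} (hτ : IsStopTime 𝔽 τ) :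
    MeasurableSet[predictableSigma 𝔽] {p : Ω × ℝ≥0 | (p.2:ℝ≥0∞) ≤ τ p.1} := by
  have : {p : Ω × ℝ≥0 | (p.2:ℝ≥0∞) ≤ τ p.1} = {p : Ω × ℝ≥0 | τ p.1 < (p.2:ℝ≥0∞)}ᶜ := by
    ext p; simp [not_lt]
  rw [this]
  exact (strictRay_predMeasurable hτ).compl

lemma graph_predMeasurable {ρ : Ω → ℝ≥0∞} (hρ : IsPredTime 𝔽 ρ) :
    MeasurableSet[predictableSigma 𝔽] (graph ρ) := by
  have : graph ρ = rayFrom ρ \ {p : Ω × ℝ≥0 | ρ p.1 < (p.2:ℝ≥0∞)} := by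
    ext p
    simp only [graph, rayFrom, mem_setOf_eq, mem_diff, not_lt]
    constructor
    · intro h; exact ⟨h.le, h.ge⟩
    · rintro ⟨h1, h2⟩; exact le_antisymm h1 h2
  rw [this]
  refine MeasurableSet.diff ?_ (strictRay_predMeasurable hρ.1)
  exact MeasurableSpace.measurableSet_generateFrom ⟨ρ, hρ, rfl⟩

lemma pred_le_optional : predictableSigma 𝔽 ≤ optionalSigma 𝔽 := by
  refine MeasurableSpace.generateFrom_le ?_
  rintro s ⟨ρ, hρ, rfl⟩
  exact MeasurableSpace.measurableSet_generateFrom ⟨ρ, hρ.1, rfl⟩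



lemma eqset_measurable {σ ρ : Ω → ℝ≥0∞} (hσ : IsStopTime 𝔽 σ) (hρ : IsStopTime 𝔽 ρ) :
    MeasurableSet[F] {ω | σ ω = ρ ω ∧ σ ω < ⊤} := by
  have h1 : Measurable[F] σ := measurable_of_isStopTime hσ
  have h2 : Measurable[F] ρ := measurable_of_isStopTime hρ
  have : {ω | σ ω = ρ ω ∧ σ ω < ⊤} =
      ({ω | σ ω ≤ ρ ω} ∩ {ω | ρ ω ≤ σ ω}) ∩ {ω | σ ω < ⊤} := by
    ext ω
    simp only [mem_inter_iff, mem_setOf_eq]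
    constructor
    · rintro ⟨h, h'⟩; exact ⟨⟨h.le, h.ge⟩, h'⟩
    · rintro ⟨⟨h, h'⟩, h''⟩; exact ⟨le_antisymm h h', h''⟩
  rw [this]
  exact ((measurableSet_le h1 h2).inter (measurableSet_le h2 h1)).inter
    (measurableSet_lt h1 measurable_const)

lemma exists_maximal_pred_family (P : Measure Ω) [IsProbabilityMeasure P]
    {σ : Ω → ℝ≥0∞} (hσ : IsStopTime 𝔽 σ) :
    ∃ ρ : ℕ → Ω → ℝ≥0∞, (∀ n, IsPredTime 𝔽 (ρ n)) ∧
      ∀ ρ' : Ω → ℝ≥0∞, IsPredTime 𝔽 ρ' →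
        P ({ω | σ ω = ρ' ω ∧ σ ω < ⊤} \ ⋃ n, {ω | σ ω = ρ n ω ∧ σ ω < ⊤}) = 0 := by
  classical
  set Fam : Type _ := {ρ : ℕ → Ω → ℝ≥0∞ // ∀ n, IsPredTime 𝔽 (ρ n)} with hFam
  have hFamNe : Nonempty Fam := ⟨⟨fun _ _ => ⊤, fun _ => isPredTime_top⟩⟩
  set m : Fam → ℝ≥0∞ := fun ρ => P (⋃ n, {ω | σ ω = ρ.1 n ω ∧ σ ω < ⊤}) with hm
  set M : ℝ≥0∞ := ⨆ ρ : Fam, m ρ with hM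
  have hMle : M ≤ 1 := by
    refine iSup_le fun ρ => ?_
    exact prob_le_one
  have hMtop : M ≠ ⊤ := (lt_of_le_of_lt hMle ENNReal.one_lt_top).ne
  -- pick near-maximal families
  have hpick : ∀ k : ℕ, ∃ ρ : Fam, M - ((k:ℝ≥0∞))⁻¹ < m ρ ∨ M = 0 := by
    intro k
    rcases eq_or_ne M 0 with h0 | h0
    · exact ⟨Classical.arbitrary Fam, Or.inr h0⟩
    · have hlt : M - ((k:ℝ≥0∞))⁻¹ < M :=
        ENNReal.sub_lt_self hMtop h0 (by simp)
      obtain ⟨ρ, hρ⟩ := lt_iSup_iff.1 (hM ▸ hlt)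
      exact ⟨ρ, Or.inl hρ⟩
  choose g hg using hpick
  rcases eq_or_ne M 0 with hM0 | hM0
  · -- trivial case
    refine ⟨fun _ _ => ⊤, fun _ => isPredTime_top, fun ρ' hρ' => ?_⟩
    have hle : P {ω | σ ω = ρ' ω ∧ σ ω < ⊤} ≤ M := by
      have : P {ω | σ ω = ρ' ω ∧ σ ω < ⊤} = m ⟨fun _ => ρ', fun _ => hρ'⟩ := by
        rw [hm]; congr 1; exact (iUnion_const _).symm
      rw [this]
      exact le_iSup m _
    refine le_antisymm ?_ zero_le
    calc P _ ≤ P {ω | σ ω = ρ' ω ∧ σ ω < ⊤} := measure_mono diff_subset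
    _ ≤ M := hle
    _ = 0 := hM0
  · -- nontrivial: combine
    set ρstar : ℕ → Ω → ℝ≥0∞ :=
      fun n => (g (Nat.pairEquiv.symm n).1).1 (Nat.pairEquiv.symm n).2 with hρstar
    have hρstarPred : ∀ n, IsPredTime 𝔽 (ρstar n) := fun n => (g _).2 _
    set U : Set Ω := ⋃ n, {ω | σ ω = ρstar n ω ∧ σ ω < ⊤} with hU
    have hUmeas : MeasurableSet[F] U :=
      MeasurableSet.iUnion fun n => eqset_measurable hσ (hρstarPred n).1
    have hUsup : ∀ k, (⋃ n, {ω | σ ω = (g k).1 n ω ∧ σ ω < ⊤}) ⊆ U := by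
      intro k ω hω
      obtain ⟨j, hj⟩ := mem_iUnion.1 hω
      refine mem_iUnion.2 ⟨Nat.pairEquiv (k, j), ?_⟩
      simp only [hρstar, Equiv.symm_apply_apply]
      exact hj
    have hPU : P U = M := by
      refine le_antisymm ?_ ?_
      · exact le_iSup m ⟨ρstar, hρstarPred⟩
      · refine ENNReal.le_of_forall_pos_le_add fun ε hε _ => ?_
        obtain ⟨k, hk⟩ := ENNReal.exists_inv_nat_lt (show (ε:ℝ≥0∞) ≠ 0 by
          exact_mod_cast hε.ne')
        rcases hg k with h | h
        · calc M ≤ (M - ((k:ℝ≥0∞))⁻¹) + ((k:ℝ≥0∞))⁻¹ := le_tsub_add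
          _ ≤ m (g k) + ε := add_le_add h.le hk.le
          _ ≤ P U + ε := add_le_add_left (measure_mono (hUsup k)) _
        · exact absurd h hM0
    refine ⟨ρstar, hρstarPred, fun ρ' hρ' => ?_⟩
    set E : Set Ω := {ω | σ ω = ρ' ω ∧ σ ω < ⊤} with hE
    have hEmeas : MeasurableSet[F] E := eqset_measurable hσ hρ'.1
    -- the combined family
    set ρ2 : ℕ → Ω → ℝ≥0∞ := fun n => if n = 0 then ρ' else ρstar (n - 1) with hρ2
    have hρ2Pred : ∀ n, IsPredTime 𝔽 (ρ2 n) := by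
      intro n
      by_cases h : n = 0 <;> simp [hρ2, h]
      exacts [hρ', hρstarPred _]
    have hUnion2 : (⋃ n, {ω | σ ω = ρ2 n ω ∧ σ ω < ⊤}) = E ∪ U := by
      ext ω
      simp only [mem_iUnion, mem_union, hU, hE, mem_setOf_eq]
      constructor
      · rintro ⟨n, hn⟩
        by_cases h : n = 0
        · left; simpa [hρ2, h] using hn
        · right; exact ⟨n - 1, by simpa [hρ2, h] using hn⟩
      · rintro (h | h)
        · exact ⟨0, by simpa [hρ2] using h⟩
        · obtain ⟨j, hj⟩ := h
          exact ⟨j + 1, by simpa [hρ2] using hj⟩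
    have hle2 : P (E ∪ U) ≤ M := by
      have : P (E ∪ U) = m ⟨ρ2, hρ2Pred⟩ := by
        show P (E ∪ U) = P (⋃ n, {ω | σ ω = ρ2 n ω ∧ σ ω < ⊤})
        rw [hUnion2]
      rw [this]
      exact le_iSup m _
    have hsplit : P U + P (E \ U) = P (E ∪ U) := by
      rw [union_comm]
      rw [← measure_union (disjoint_sdiff_self_right) (hEmeas.diff hUmeas)]
      congr 1
      rw [union_diff_self]
    have : P U + P (E \ U) ≤ P U + 0 := by
      rw [add_zero, hsplit, hPU]
      exact hle2
    have := ENNReal.le_of_add_le_add_left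
      (lt_of_le_of_lt (le_trans (measure_mono (subset_univ U)) prob_le_one)
        ENNReal.one_lt_top).ne this
    simpa using this



lemma graph_top : graph (fun _ : Ω => (⊤:ℝ≥0∞)) = ∅ := by
  ext ⟨ω, t⟩
  simp only [graph, mem_setOf_eq, mem_empty_iff_false, iff_false]
  exact fun h => ENNReal.top_ne_coe h

lemma isThinSet_empty : IsThinSet 𝔽 (∅ : Set (Ω × ℝ≥0)) :=
  ⟨fun _ _ => ⊤, fun _ => isStopTime_top, by simp [graph_top]⟩

lemma isTotallyInaccessible_top (P : Measure Ω) :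
    IsTotallyInaccessible 𝔽 P (fun _ => (⊤:ℝ≥0∞)) := by
  refine ⟨isStopTime_top, fun ρ hρ => ?_⟩
  have : {ω : Ω | (⊤:ℝ≥0∞) = ρ ω ∧ (⊤:ℝ≥0∞) < ⊤} = ∅ := by
    ext ω; simp
  rw [this, measure_empty]

lemma isTotInaccThinSet_empty (P : Measure Ω) :
    IsTotInaccThinSet 𝔽 P (∅ : Set (Ω × ℝ≥0)) :=
  ⟨fun _ _ => ⊤, fun _ => isTotallyInaccessible_top P, by simp [graph_top]⟩

lemma iUnion_pair {α : Type*} (A : ℕ → ℕ → Set α) :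
    (⋃ m, A (Nat.pairEquiv.symm m).1 (Nat.pairEquiv.symm m).2) = ⋃ n, ⋃ k, A n k := by
  ext x
  simp only [mem_iUnion]
  constructor
  · rintro ⟨m, h⟩; exact ⟨_, _, h⟩
  · rintro ⟨n, k, h⟩
    exact ⟨Nat.pairEquiv (n, k), by simpa [Equiv.symm_apply_apply] using h⟩

end Helpers

/-- every optional set differs from some predictable set by a thin set:
`O \ P` is thin and `P \ O` is a totally inaccessible thin set. -/
theorem optional_approx_predictable {Ω : Type*} {F : MeasurableSpace Ω}
    (𝔽 : Filtration ℝ≥0 F) (P : Measure Ω) [IsProbabilityMeasure P]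
    (O : Set (Ω × ℝ≥0)) (hO : MeasurableSet[optionalSigma 𝔽] O) :
    ∃ S : Set (Ω × ℝ≥0), MeasurableSet[predictableSigma 𝔽] S ∧
      IsThinSet 𝔽 (O \ S) ∧ IsTotInaccThinSet 𝔽 P (S \ O) := by
  classical
  set Φ : Set (Ω × ℝ≥0) → Prop := fun O => ∃ S : Set (Ω × ℝ≥0),
    MeasurableSet[predictableSigma 𝔽] S ∧
      IsThinSet 𝔽 (O \ S) ∧ IsTotInaccThinSet 𝔽 P (S \ O) with hΦ
  suffices h : Φ O ∧ Φ Oᶜ from h.1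
  refine MeasurableSpace.generateFrom_induction
    (C := {s | ∃ τ, IsStopTime 𝔽 τ ∧ s = rayFrom τ})
    (fun O _ => Φ O ∧ Φ Oᶜ) ?_ ?_ ?_ ?_ O hO
  · -- generators
    rintro s ⟨τ, hτ, rfl⟩ -
    constructor
    · -- Φ (rayFrom τ)
      refine ⟨{p : Ω × ℝ≥0 | τ p.1 < (p.2:ℝ≥0∞)}, strictRay_predMeasurable hτ, ?_, ?_⟩
      · have h1 : rayFrom τ \ {p : Ω × ℝ≥0 | τ p.1 < (p.2:ℝ≥0∞)} = graph τ := by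
          ext p
          simp only [rayFrom, graph, mem_diff, mem_setOf_eq, not_lt]
          constructor
          · rintro ⟨ha, hb⟩; exact le_antisymm ha hb
          · intro h; exact ⟨h.le, h.ge⟩
        rw [h1]
        exact ⟨fun _ => τ, fun _ => hτ, (iUnion_const _).symm⟩
      · have h2 : {p : Ω × ℝ≥0 | τ p.1 < (p.2:ℝ≥0∞)} \ rayFrom τ = ∅ :=
          diff_eq_empty.2 fun p hp => show τ p.1 ≤ (p.2:ℝ≥0∞) from le_of_lt hp
        rw [h2]
        exact isTotInaccThinSet_empty P
    · -- Φ (rayFrom τ)ᶜ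
      obtain ⟨ρ, hρPred, hρmax⟩ := exists_maximal_pred_family (𝔽 := 𝔽) P hτ
      set C : Set Ω := {ω | ∀ n, ¬(τ ω = ρ n ω ∧ τ ω < ⊤)} with hC
      have hCmem : ∀ t : ℝ≥0, MeasurableSet[𝔽 t] (C ∩ {ω | τ ω ≤ (t:ℝ≥0∞)}) := by
        intro t
        have heq : C ∩ {ω | τ ω ≤ (t:ℝ≥0∞)} = {ω | τ ω ≤ (t:ℝ≥0∞)} \
            ⋃ n, ({ω | τ ω = ρ n ω} ∩ {ω | τ ω ≤ (t:ℝ≥0∞)}) := by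
          ext ω
          constructor
          · rintro ⟨h1, h2⟩
            refine ⟨h2, fun hmem => ?_⟩
            obtain ⟨n, hn⟩ := mem_iUnion.1 hmem
            exact h1 n ⟨hn.1, lt_of_le_of_lt hn.2 ENNReal.coe_lt_top⟩
          · rintro ⟨h1, h2⟩
            refine ⟨?_, h1⟩
            intro n hn
            exact h2 (mem_iUnion.2 ⟨n, ⟨hn.1, h1⟩⟩)
        rw [heq]
        exact (hτ t).diff (MeasurableSet.iUnion fun n => eq_inter_le_mem hτ (hρPred n).1 t)
      have hti : IsTotallyInaccessible 𝔽 P (restr τ C) := by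
        refine ⟨isStopTime_restr hCmem, fun ρ' hρ' => ?_⟩
        refine measure_mono_null ?_ (hρmax ρ' hρ')
        intro ω hω
        simp only [mem_setOf_eq, restr] at hω
        by_cases h : ω ∈ C
        · rw [if_pos h] at hω
          refine ⟨hω, fun hmem => ?_⟩
          obtain ⟨n, hn⟩ := mem_iUnion.1 hmem
          exact h n hn
        · rw [if_neg h] at hω
          exact absurd hω.2 (lt_irrefl ⊤)
      have hRayMeas : MeasurableSet[optionalSigma 𝔽] (rayFrom τ) :=
        MeasurableSpace.measurableSet_generateFrom ⟨τ, hτ, rfl⟩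
      have hSmeas : MeasurableSet[predictableSigma 𝔽]
          ({p : Ω × ℝ≥0 | (p.2:ℝ≥0∞) ≤ τ p.1} \ ⋃ n, graph (ρ n)) :=
        (closedRay_predMeasurable hτ).diff
          (MeasurableSet.iUnion fun n => graph_predMeasurable (hρPred n))
      refine ⟨{p : Ω × ℝ≥0 | (p.2:ℝ≥0∞) ≤ τ p.1} \ ⋃ n, graph (ρ n), hSmeas, ?_, ?_⟩
      · refine isThinSet_of_subset (𝔽 := 𝔽) ?_ ρ (fun n => (hρPred n).1) ?_
        · exact (hRayMeas.compl).diff (pred_le_optional _ hSmeas)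
        · rintro ⟨ω, t⟩ ⟨h1, h2⟩
          have h1' : ((t:ℝ≥0):ℝ≥0∞) ≤ τ ω :=
            le_of_lt (not_le.1 (fun h => h1 (show τ ω ≤ ((t:ℝ≥0):ℝ≥0∞) from h)))
          by_contra hng
          exact h2 ⟨h1', hng⟩
      · refine isTotInaccThinSet_of_subset (𝔽 := 𝔽) ?_ (fun _ => restr τ C)
          (fun _ => hti) ?_
        · exact (pred_le_optional _ hSmeas).diff hRayMeas.compl
        · rintro ⟨ω, t⟩ ⟨⟨h1, h2⟩, h3⟩
          simp only [mem_compl_iff, not_not, rayFrom, mem_setOf_eq] at h3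
          simp only [mem_setOf_eq] at h1
          have heq : τ ω = (t:ℝ≥0∞) := le_antisymm h3 h1
          have hmemC : ω ∈ C := by
            show ∀ n, ¬(τ ω = ρ n ω ∧ τ ω < ⊤)
            intro n hn
            exact h2 (mem_iUnion.2
              ⟨n, show ρ n ω = (t:ℝ≥0∞) from hn.1.symm.trans heq⟩)
          refine mem_iUnion.2 ⟨0, ?_⟩
          show (ω, t) ∈ graph (restr τ C)
          rw [graph_restr]
          exact ⟨heq, hmemC⟩
  · -- empty
    constructor
    · exact ⟨∅, @MeasurableSet.empty _ (predictableSigma 𝔽), by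
        simp only [diff_empty, diff_self]
        exact ⟨isThinSet_empty, isTotInaccThinSet_empty P⟩⟩
    · refine ⟨univ, @MeasurableSet.univ _ (predictableSigma 𝔽), ?_, ?_⟩
      · rw [compl_empty, diff_self]
        exact isThinSet_empty
      · rw [compl_empty, diff_self]
        exact isTotInaccThinSet_empty P
  · -- complement
    rintro t ht ⟨h1, h2⟩
    exact ⟨h2, by rwa [compl_compl]⟩
  · -- countable union
    intro f hf ih
    choose S hSmeas hSthin hStot using fun n => (ih n).1
    choose S' hS'meas hS'thin hS'tot using fun n => (ih n).2
    choose τa hτa1 hτa2 using hSthin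
    choose τb hτb1 hτb2 using hStot
    choose τc hτc1 hτc2 using hS'thin
    choose τd hτd1 hτd2 using hS'tot
    constructor
    · refine ⟨⋃ n, S n, MeasurableSet.iUnion hSmeas, ?_, ?_⟩
      · refine isThinSet_of_subset (𝔽 := 𝔽) ?_
          (fun m => τa (Nat.pairEquiv.symm m).1 (Nat.pairEquiv.symm m).2)
          (fun m => hτa1 _ _) ?_
        · exact (MeasurableSet.iUnion hf).diff
            (pred_le_optional _ (MeasurableSet.iUnion hSmeas))
        · rw [iUnion_pair (fun n k => graph (τa n k))]
          rintro p ⟨h1, h2⟩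
          obtain ⟨n, hn⟩ := mem_iUnion.1 h1
          have hp : p ∈ f n \ S n := ⟨hn, fun hs => h2 (mem_iUnion.2 ⟨n, hs⟩)⟩
          refine mem_iUnion.2 ⟨n, ?_⟩
          rw [← hτa2 n]
          exact hp
      · refine isTotInaccThinSet_of_subset (𝔽 := 𝔽) ?_
          (fun m => τb (Nat.pairEquiv.symm m).1 (Nat.pairEquiv.symm m).2)
          (fun m => hτb1 _ _) ?_
        · exact (pred_le_optional _ (MeasurableSet.iUnion hSmeas)).diff
            (MeasurableSet.iUnion hf)
        · rw [iUnion_pair (fun n k => graph (τb n k))]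
          rintro p ⟨h1, h2⟩
          obtain ⟨n, hn⟩ := mem_iUnion.1 h1
          have hp : p ∈ S n \ f n := ⟨hn, fun hs => h2 (mem_iUnion.2 ⟨n, hs⟩)⟩
          refine mem_iUnion.2 ⟨n, ?_⟩
          rw [← hτb2 n]
          exact hp
    · refine ⟨⋂ n, S' n, MeasurableSet.iInter fun n => hS'meas n, ?_, ?_⟩
      · refine isThinSet_of_subset (𝔽 := 𝔽) ?_
          (fun m => τc (Nat.pairEquiv.symm m).1 (Nat.pairEquiv.symm m).2)
          (fun m => hτc1 _ _) ?_
        · exact ((MeasurableSet.iUnion hf).compl).diff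
            (pred_le_optional _ (MeasurableSet.iInter fun n => hS'meas n))
        · rw [iUnion_pair (fun n k => graph (τc n k))]
          rintro p ⟨h1, h2⟩
          obtain ⟨n, hn⟩ := by
            have := (mem_iInter (s := S')).not.1 h2
            push_neg at this
            exact this
          have hp : p ∈ (f n)ᶜ \ S' n :=
            ⟨fun hs => h1 (mem_iUnion.2 ⟨n, hs⟩), hn⟩
          refine mem_iUnion.2 ⟨n, ?_⟩
          rw [← hτc2 n]
          exact hp
      · refine isTotInaccThinSet_of_subset (𝔽 := 𝔽) ?_
          (fun m => τd (Nat.pairEquiv.symm m).1 (Nat.pairEquiv.symm m).2)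
          (fun m => hτd1 _ _) ?_
        · exact (pred_le_optional _ (MeasurableSet.iInter fun n => hS'meas n)).diff
            ((MeasurableSet.iUnion hf).compl)
        · rw [iUnion_pair (fun n k => graph (τd n k))]
          rintro p ⟨h1, h2⟩
          simp only [mem_compl_iff, not_not] at h2
          obtain ⟨n, hn⟩ := mem_iUnion.1 h2
          have hp : p ∈ S' n \ (f n)ᶜ := ⟨mem_iInter.1 h1 n, fun hs => hs hn⟩
          refine mem_iUnion.2 ⟨n, ?_⟩
          rw [← hτd2 n]
          exact hp
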